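/- For every positive integer n, Σ_{π ⊢ n} (−1)^{mex(π)−1} mex(π) = Σ_{m≥0} (−1)^m (2m+1) p(n − m(m+1)/2), with p(j)=0 for j<0. -/
import Mathlib


open Finset

/-- The minimal excludant of a partition: the least positive integer not a part. -/
noncomputable def mex {n : ℕ} (π : Nat.Partition n) : ℕ :=
  sInf {m : ℕ | 0 < m ∧ m ∉ π.parts}

/-- Number of partitions of `n` with minimal excludant `m`. -/
noncomputable def pmex (m n : ℕ) : ℕ :=
  ((Finset.univ : Finset (Nat.Partition n)).filter (fun π => mex π = m)).card

/-- The partition function, extended by `0` on negative integers. -/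
noncomputable def pz (k : ℤ) : ℕ := if 0 ≤ k then Fintype.card (Nat.Partition k.toNat) else 0

/-- Number of partitions of `m` into distinct parts. -/
def qdist (m : ℕ) : ℕ := (Nat.Partition.distincts m).card

/-- A two-colored distinct-parts partition of `n`: a set of distinct (part, color)
pairs with positive parts summing to `n`. -/
def IsTCD (n : ℕ) (s : Finset (ℕ × Fin 2)) : Prop :=
  (∀ p ∈ s, 0 < p.1) ∧ ∑ p ∈ s, p.1 = n

noncomputable def D2 (n : ℕ) : ℕ := Set.ncard {s : Finset (ℕ × Fin 2) | IsTCD n s}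
noncomputable def D2e (n : ℕ) : ℕ :=
  Set.ncard {s : Finset (ℕ × Fin 2) | IsTCD n s ∧ Even s.card}
noncomputable def D2o (n : ℕ) : ℕ :=
  Set.ncard {s : Finset (ℕ × Fin 2) | IsTCD n s ∧ Odd s.card}

open scoped Classical

lemma icc_sum2 (m : ℕ) : (∑ i ∈ Finset.Icc 1 m, i) * 2 = m * (m + 1) := by
  induction m with
  | zero => simp
  | succ k ih => rw [Finset.sum_Icc_succ_top (by omega), add_mul, ih]; ring

lemma icc_sum (m : ℕ) : ((Finset.Icc 1 m).val).sum = m * (m + 1) / 2 := by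
  have h1 : ((Finset.Icc 1 m).val).sum = ∑ i ∈ Finset.Icc 1 m, i := by
    rw [Finset.sum]; rw [Multiset.map_id']
  have h2 := icc_sum2 m
  omega

noncomputable def am (m n : ℕ) : ℕ :=
  ((Finset.univ : Finset (Nat.Partition n)).filter
    (fun π => ∀ i ∈ Finset.Icc 1 m, i ∈ π.parts)).card

lemma S_le_parts {n m : ℕ} {π : Nat.Partition n}
    (h : ∀ i ∈ Finset.Icc 1 m, i ∈ π.parts) : (Finset.Icc 1 m).val ≤ π.parts := by
  rw [Multiset.le_iff_count]
  intro a
  by_cases ha : a ∈ (Finset.Icc 1 m).val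
  · have h1 : Multiset.count a (Finset.Icc 1 m).val = 1 :=
      Multiset.count_eq_one_of_mem (Finset.Icc 1 m).nodup ha
    rw [h1]
    exact Multiset.one_le_count_iff_mem.2 (h a ha)
  · simp [Multiset.count_eq_zero_of_notMem ha]

lemma msum_le {s t : Multiset ℕ} (h : s ≤ t) : s.sum ≤ t.sum := by
  obtain ⟨u, rfl⟩ := Multiset.le_iff_exists_add.1 h
  simp

lemma am_eq_pz' (m n T : ℕ) (hTsum : ((Finset.Icc 1 m).val).sum = T) :
    (am m n : ℤ) = pz ((n : ℤ) - T) := by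
  by_cases hle : T ≤ n
  · have hpz : pz ((n : ℤ) - T) = Fintype.card (Nat.Partition (n - T)) := by
      rw [pz, if_pos (by omega)]
      have h3 : ((n : ℤ) - T).toNat = n - T := by omega
      rw [h3]
    rw [hpz, ← Finset.card_univ]
    congr 1
    rw [am]
    refine Finset.card_bij'
      (i := fun π hπ => (⟨π.parts - (Finset.Icc 1 m).val, ?_, ?_⟩ : Nat.Partition (n - T)))
      (j := fun σ _ => (⟨σ.parts + (Finset.Icc 1 m).val, ?_, ?_⟩ : Nat.Partition n))
      ?_ ?_ ?_ ?_
    · intro i hi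
      exact π.parts_pos (Multiset.mem_of_le (Multiset.sub_le_self _ _) hi)
    · have hS : (Finset.Icc 1 m).val ≤ π.parts :=
        S_le_parts (by simpa using (Finset.mem_filter.1 hπ).2)
      have h2 := tsub_add_cancel_of_le hS
      have hsum : (π.parts - (Finset.Icc 1 m).val).sum + ((Finset.Icc 1 m).val).sum = n := by
        rw [← Multiset.sum_add, h2, π.parts_sum]
      omega
    · intro i hi
      rcases Multiset.mem_add.1 hi with h | h
      · exact σ.parts_pos h
      · have := Finset.mem_Icc.1 (by simpa using h)
        omega
    · rw [Multiset.sum_add, σ.parts_sum, hTsum]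
      omega
    · intro a ha; exact Finset.mem_univ _
    · intro σ _
      simp only [Finset.mem_filter, Finset.mem_univ, true_and]
      intro i hi
      exact Multiset.mem_add.2 (Or.inr hi)
    · intro π hπ
      have hS : (Finset.Icc 1 m).val ≤ π.parts :=
        S_le_parts (by simpa using (Finset.mem_filter.1 hπ).2)
      exact Nat.Partition.ext (tsub_add_cancel_of_le hS)
    · intro σ _
      exact Nat.Partition.ext (add_tsub_cancel_right _ _)
  · have h0 : am m n = 0 := by
      rw [am, Finset.card_eq_zero, Finset.filter_eq_empty_iff]
      intro π _ h
      have hle' := msum_le (S_le_parts h)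
      rw [hTsum, π.parts_sum] at hle'
      omega
    rw [h0, pz, if_neg (by omega)]

lemma am_eq_pz (m n : ℕ) : (am m n : ℤ) = pz ((n : ℤ) - (m * (m + 1) / 2 : ℕ)) :=
  am_eq_pz' m n _ (icc_sum m)

lemma part_le {n : ℕ} (π : Nat.Partition n) {a : ℕ} (ha : a ∈ π.parts) : a ≤ n :=
  π.parts_sum ▸ Multiset.single_le_sum (fun _ _ => Nat.zero_le _) a ha

lemma mexSet_nonempty {n : ℕ} (π : Nat.Partition n) :
    {m : ℕ | 0 < m ∧ m ∉ π.parts}.Nonempty :=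
  ⟨n + 1, Nat.succ_pos n, fun h => by have := part_le π h; omega⟩

lemma mex_mem {n : ℕ} (π : Nat.Partition n) :
    0 < mex π ∧ mex π ∉ π.parts := Nat.sInf_mem (mexSet_nonempty π)

lemma mex_le {n : ℕ} (π : Nat.Partition n) : mex π ≤ n + 1 :=
  Nat.sInf_le ⟨Nat.succ_pos n, fun h => by have := part_le π h; omega⟩

lemma lt_mex_mem {n : ℕ} (π : Nat.Partition n) {k : ℕ} (hk : 0 < k) (h : k < mex π) :
    k ∈ π.parts := by
  by_contra hmem
  exact Nat.notMem_of_lt_sInf h ⟨hk, hmem⟩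

lemma filter_mex_succ (m n : ℕ) :
    ((Finset.univ : Finset (Nat.Partition n)).filter (fun π => mex π = m + 1)).card
      + am (m + 1) n = am m n := by
  have hsets : (Finset.univ : Finset (Nat.Partition n)).filter
      (fun π => ∀ i ∈ Finset.Icc 1 m, i ∈ π.parts)
      = Finset.univ.filter (fun π => mex π = m + 1)
        ∪ Finset.univ.filter (fun π => ∀ i ∈ Finset.Icc 1 (m+1), i ∈ π.parts) := by
    ext π
    simp only [Finset.mem_filter, Finset.mem_univ, true_and, Finset.mem_union]
    constructor
    · intro h
      by_cases hm1 : (m+1) ∈ π.parts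
      · right
        intro i hi
        rcases Finset.mem_Icc.1 hi with ⟨h1, h2⟩
        rcases Nat.lt_or_ge i (m+1) with hlt | hge
        · exact h i (Finset.mem_Icc.2 ⟨h1, by omega⟩)
        · have : i = m + 1 := by omega
          exact this ▸ hm1
      · left
        refine le_antisymm (Nat.sInf_le ⟨Nat.succ_pos m, hm1⟩) ?_
        by_contra hlt
        push_neg at hlt
        have hmem := mex_mem π
        have := h (mex π) (Finset.mem_Icc.2 ⟨hmem.1, by omega⟩)
        exact hmem.2 this
    · rintro (h | h)
      · intro i hi
        rcases Finset.mem_Icc.1 hi with ⟨h1, h2⟩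
        exact lt_mex_mem π h1 (by omega)
      · intro i hi
        rcases Finset.mem_Icc.1 hi with ⟨h1, h2⟩
        exact h i (Finset.mem_Icc.2 ⟨h1, by omega⟩)
  have hdisj : Disjoint ((Finset.univ : Finset (Nat.Partition n)).filter (fun π => mex π = m + 1))
      (Finset.univ.filter (fun π => ∀ i ∈ Finset.Icc 1 (m+1), i ∈ π.parts)) := by
    rw [Finset.disjoint_left]
    intro π h1 h2
    simp only [Finset.mem_filter, Finset.mem_univ, true_and] at h1 h2
    have := h2 (m+1) (Finset.mem_Icc.2 ⟨by omega, le_refl _⟩)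
    exact (h1 ▸ mex_mem π).2 this
  rw [am, am, hsets, Finset.card_union_of_disjoint hdisj]
  congr!

lemma am_top (n : ℕ) : am (n + 1) n = 0 := by
  rw [am, Finset.card_eq_zero, Finset.filter_eq_empty_iff]
  intro π _ h
  have h1 := msum_le (S_le_parts h)
  rw [π.parts_sum] at h1
  have h2 : (n+1 : ℕ) ≤ ((Finset.Icc 1 (n+1)).val).sum := by
    have : (n+1 : ℕ) ∈ (Finset.Icc 1 (n+1)).val := by simp
    exact Multiset.single_le_sum (fun _ _ => Nat.zero_le _) _ this
  omega

lemma abel_sum (N : ℕ) (A : ℕ → ℤ) (h : A (N+1) = 0) :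
    ∑ k ∈ Finset.range (N+1), (-1:ℤ)^k * (k+1) * (A k - A (k+1)) =
      ∑ k ∈ Finset.range (N+1), (-1:ℤ)^k * (2*k+1) * A k := by
  have key : ∀ k ∈ Finset.range (N+1), (-1:ℤ)^k * (k+1) * (A k - A (k+1)) =
      (-1:ℤ)^k * (2*k+1) * A k +
        ((-1:ℤ)^(k+1) * (k+1) * A (k+1) - (-1:ℤ)^k * k * A k) := by
    intro k _
    rw [pow_succ]
    push_cast
    ring
  have tel := Finset.sum_range_sub (fun j => (-1:ℤ)^j * (j:ℤ) * A j) (N+1)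
  push_cast at tel
  rw [Finset.sum_congr rfl key, Finset.sum_add_distrib, tel]
  simp [h]

theorem sigma_bar_mex_formula (n : ℕ) (hn : 0 < n) :
    ∑ π : Nat.Partition n, (-1 : ℤ) ^ (mex π - 1) * (mex π : ℤ) =
      ∑ m ∈ Finset.range (n + 1),
        (-1 : ℤ) ^ m * (2 * m + 1) * pz ((n : ℤ) - (m * (m + 1) / 2 : ℕ)) := by
  have hmaps : ∀ π ∈ (Finset.univ : Finset (Nat.Partition n)), mex π ∈ Finset.range (n+2) :=
    fun π _ => Finset.mem_range.2 (by have := mex_le π; omega)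
  rw [← Finset.sum_fiberwise_of_maps_to hmaps (fun π => (-1:ℤ)^(mex π - 1) * (mex π : ℤ))]
  have inner : ∀ j ∈ Finset.range (n+2),
      ∑ π ∈ Finset.univ.filter (fun π : Nat.Partition n => mex π = j),
        (-1:ℤ)^(mex π - 1) * (mex π : ℤ) = (-1:ℤ)^(j-1) * j * pmex j n := by
    intro j _
    have hc : ∀ π ∈ Finset.univ.filter (fun π : Nat.Partition n => mex π = j),
        (-1:ℤ)^(mex π - 1) * (mex π : ℤ) = (-1:ℤ)^(j-1) * j := by
      intro π hπ
      rw [(Finset.mem_filter.1 hπ).2]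
    rw [Finset.sum_congr rfl hc, Finset.sum_const, nsmul_eq_mul, pmex]
    ring_nf
  rw [Finset.sum_congr rfl inner, Finset.sum_range_succ']
  have h0 : (-1:ℤ)^(0-1) * (0:ℕ) * pmex 0 n = 0 := by norm_num
  rw [h0, add_zero]
  have hstep : ∀ k ∈ Finset.range (n+1),
      (-1:ℤ)^((k+1)-1) * ((k+1 : ℕ) : ℤ) * pmex (k+1) n =
      (-1:ℤ)^k * ((k:ℤ)+1) * ((am k n : ℤ) - (am (k+1) n : ℤ)) := by
    intro k _
    have h := filter_mex_succ k n
    have hpm : (pmex (k+1) n : ℤ) = (am k n : ℤ) - (am (k+1) n : ℤ) := by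
      have : pmex (k+1) n + am (k+1) n = am k n := by
        rw [pmex]; convert h using 3
      push_cast [← this]
      ring
    rw [hpm]
    push_cast
    ring_nf
  rw [Finset.sum_congr rfl hstep, abel_sum n (fun k => (am k n : ℤ)) (by exact_mod_cast congrArg Nat.cast (am_top n))]
  exact Finset.sum_congr rfl fun m _ => by rw [am_eq_pz]
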